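/- Let W be a subset of a metric space (X,d) and suppose that the density den(W) is a cardinal of uncountable cofinality (i.e., cf(den(W)) > ℵ₀). Then there exists ε₀ > 0 such that for all ε ∈ (0, ε₀) the equalities N̂^X_ε(W) = N̂_ε(W) = M̂_ε(W) = M*_ε(W) = den(W) hold. -/

import Mathlib

open Cardinal Set

universe u

/-- `C` is an `ε`-net for `W` (w.r.t. the distance function `d`): every point of `W`
is within distance `ε` of some point of `C`. -/
def IsNet {α : Type u} (d : α → α → ℝ) (ε : ℝ) (W C : Set α) : Prop :=
  ∀ w ∈ W, ∃ c ∈ C, d w c ≤ ε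

/-- `A` is `ε`-distinguishable: distinct points of `A` are at distance `> ε`. -/
def IsDistinguishable {α : Type u} (d : α → α → ℝ) (ε : ℝ) (A : Set α) : Prop :=
  ∀ x ∈ A, ∀ y ∈ A, x ≠ y → ε < d x y

/-- `N̂ᴬ_ε(W)`: the smallest cardinality of a set `C ⊆ A` which is an `ε`-net for `W`. -/
noncomputable def coveringNumberIn {α : Type u} (d : α → α → ℝ) (ε : ℝ) (A W : Set α) :
    Cardinal.{u} :=
  sInf {κ | ∃ C : Set α, C ⊆ A ∧ IsNet d ε W C ∧ #C = κ}

/-- `M*_ε(W)`: the smallest cardinal `≥ card A` for every `ε`-distinguishable `A ⊆ W`. -/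
noncomputable def packingNumberSup {α : Type u} (d : α → α → ℝ) (ε : ℝ) (W : Set α) :
    Cardinal.{u} :=
  sSup {κ | ∃ A : Set α, A ⊆ W ∧ IsDistinguishable d ε A ∧ #A = κ}

/-- `M̂_ε(W)`: the smallest cardinality of a maximal `ε`-distinguishable subset of `W`. -/
noncomputable def maximalPackingInf {α : Type u} (d : α → α → ℝ) (ε : ℝ) (W : Set α) :
    Cardinal.{u} :=
  sInf {κ | ∃ A : Set α, A ⊆ W ∧ IsDistinguishable d ε A ∧
    (∀ B : Set α, B ⊆ W → IsDistinguishable d ε B → A ⊆ B → A = B) ∧ #A = κ}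

/-- `den(W)`: the smallest cardinality of a dense subset of the metric subspace `W`. -/
noncomputable def metricDensity {X : Type u} [MetricSpace X] (W : Set X) : Cardinal.{u} :=
  sInf {κ | ∃ D : Set X, D ⊆ W ∧ (∀ w ∈ W, ∀ δ : ℝ, 0 < δ → ∃ y ∈ D, dist w y < δ) ∧ #D = κ}

/-- There is a dense subset of `W` realizing the density. -/
lemma exists_dense_card {X : Type u} [MetricSpace X] (W : Set X) :
    ∃ D : Set X, D ⊆ W ∧ (∀ w ∈ W, ∀ δ : ℝ, 0 < δ → ∃ y ∈ D, dist w y < δ) ∧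
      Cardinal.mk D = metricDensity W := by
  have hne : {κ | ∃ D : Set X, D ⊆ W ∧
      (∀ w ∈ W, ∀ δ : ℝ, 0 < δ → ∃ y ∈ D, dist w y < δ) ∧ #D = κ}.Nonempty :=
    ⟨#W, W, subset_rfl, fun w hw δ hδ => ⟨w, hw, by rwa [dist_self]⟩, rfl⟩
  exact csInf_mem hne

/-- Any `ε`-distinguishable subset of `W` has cardinality at most `den W`. -/
lemma card_le_density {X : Type u} [MetricSpace X] {W A : Set X} {ε : ℝ} (hε : 0 < ε)
    (hAW : A ⊆ W) (hA : IsDistinguishable dist ε A) : #A ≤ metricDensity W := by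
  obtain ⟨D, hDW, hDd, hDc⟩ := exists_dense_card W
  have Hf : ∀ a : A, ∃ y : D, dist (a : X) (y : X) < ε / 2 := by
    intro a
    obtain ⟨y, hy, hlt⟩ := hDd a (hAW a.2) (ε / 2) (by linarith)
    exact ⟨⟨y, hy⟩, hlt⟩
  choose f hf using Hf
  have hinj : Function.Injective f := by
    intro a b hab
    by_contra hne
    have hne' : (a : X) ≠ (b : X) := fun hc => hne (Subtype.ext hc)
    have h1 : ε < dist (a : X) (b : X) := hA a a.2 b b.2 hne'
    have h2 : dist (a : X) (b : X) ≤ dist (a : X) (f a : X) + dist (f a : X) (b : X) :=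
      dist_triangle _ _ _
    have h3 : dist (f a : X) (b : X) < ε / 2 := by
      rw [hab, dist_comm]; exact hf b
    have := hf a
    linarith
  calc #A ≤ #D := mk_le_of_injective hinj
    _ = metricDensity W := hDc

/-- There exists a maximal `ε`-distinguishable subset of `W`. -/
lemma exists_maximal_distinguishable {X : Type u} [MetricSpace X] (W : Set X) (ε : ℝ) :
    ∃ A : Set X, A ⊆ W ∧ IsDistinguishable dist ε A ∧
      (∀ B : Set X, B ⊆ W → IsDistinguishable dist ε B → A ⊆ B → A = B) := by
  obtain ⟨m, hm⟩ := zorn_subset {A : Set X | A ⊆ W ∧ IsDistinguishable dist ε A} (by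
    intro c hcS hchain
    refine ⟨⋃₀ c, ⟨sUnion_subset fun s hs => (hcS hs).1, ?_⟩,
      fun s hs => subset_sUnion_of_mem hs⟩
    rintro x hx y hy hxy
    obtain ⟨s, hs, hxs⟩ := hx
    obtain ⟨t, ht, hyt⟩ := hy
    rcases hchain.total hs ht with hst | hts
    · exact (hcS ht).2 x (hst hxs) y hyt hxy
    · exact (hcS hs).2 x hxs y (hts hyt) hxy)
  exact ⟨m, hm.1.1, hm.1.2, fun B hBW hBd hmB =>
    le_antisymm hmB (hm.2 ⟨hBW, hBd⟩ hmB)⟩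

/-- A maximal `ε`-distinguishable subset of `W` is an `ε`-net for `W` (for `ε > 0`). -/
lemma maximal_isNet {X : Type u} [MetricSpace X] {W A : Set X} {ε : ℝ} (hε : 0 < ε)
    (hAW : A ⊆ W) (hA : IsDistinguishable dist ε A)
    (hmax : ∀ B : Set X, B ⊆ W → IsDistinguishable dist ε B → A ⊆ B → A = B) :
    IsNet dist ε W A := by
  intro w hw
  by_contra hcon
  push_neg at hcon
  have hdist : IsDistinguishable dist ε (insert w A) := by
    rintro x (rfl | hx) y (rfl | hy) hxy
    · exact absurd rfl hxy
    · exact hcon y hy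
    · rw [dist_comm]; exact hcon x hx
    · exact hA x hx y hy hxy
  have heq : A = insert w A :=
    hmax _ (insert_subset hw hAW) hdist (subset_insert _ _)
  have hwA : w ∈ A := heq ▸ mem_insert w A
  have := hcon w hwA
  rw [dist_self] at this
  linarith

/-- Theorem 1.12: if `den(W)` has uncountable cofinality, then there is `ε₀ > 0` such that
`N̂ˣ_ε(W) = N̂_ε(W) = M̂_ε(W) = M*_ε(W) = den(W)` for all `ε ∈ (0, ε₀)`. -/
theorem covering_packing_eq_density {X : Type u} [MetricSpace X] (W : Set X)
    (h : Cardinal.aleph0 < (metricDensity W).ord.cof) :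
    ∃ ε₀ : ℝ, 0 < ε₀ ∧ ∀ ε : ℝ, 0 < ε → ε < ε₀ →
      coveringNumberIn dist ε Set.univ W = coveringNumberIn dist ε W W ∧
      coveringNumberIn dist ε W W = maximalPackingInf dist ε W ∧
      maximalPackingInf dist ε W = packingNumberSup dist ε W ∧
      packingNumberSup dist ε W = metricDensity W := by
  set μ := metricDensity W with hμdef
  have hℵμ : ℵ₀ < μ := h.trans_le (Ordinal.cof_ord_le μ)
  -- W is nonempty
  have hWne : W.Nonempty := by
    by_contra hc
    rw [not_nonempty_iff_eq_empty] at hc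
    have hμ0 : μ ≤ 0 := by
      refine csInf_le (OrderBot.bddBelow _) ⟨∅, empty_subset _, ?_, mk_emptyCollection X⟩
      simp [hc]
    exact (hℵμ.trans_le hμ0).not_ge zero_le
  obtain ⟨w₀, hw₀⟩ := hWne
  -- Lower bound: for all small enough ε, den W ≤ N̂ˣ_ε(W)
  have hlow : ∃ ε₀ : ℝ, 0 < ε₀ ∧ ∀ ε : ℝ, 0 < ε → ε < ε₀ →
      μ ≤ coveringNumberIn dist ε Set.univ W := by
    by_contra hcon
    push_neg at hcon
    have H : ∀ n : ℕ, ∃ ε : ℝ, 0 < ε ∧ ε < 1 / (n + 1) ∧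
        coveringNumberIn dist ε Set.univ W < μ := by
      intro n
      obtain ⟨ε, hε1, hε2, hε3⟩ := hcon (1 / (n + 1)) (by positivity)
      exact ⟨ε, hε1, hε2, hε3⟩
    choose ε hε1 hε2 hε3 using H
    classical
    have H2 : ∀ n : ℕ, ∃ C : Set X, C ⊆ Set.univ ∧ IsNet dist (ε n) W C ∧
        Cardinal.mk C = coveringNumberIn dist (ε n) Set.univ W := by
      intro n
      have hne : {κ | ∃ C : Set X, C ⊆ Set.univ ∧ IsNet dist (ε n) W C ∧ #C = κ}.Nonempty :=
        ⟨#W, W, subset_univ W, fun w hw => ⟨w, hw, by rw [dist_self]; exact (hε1 n).le⟩, rfl⟩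
      exact csInf_mem hne
    choose C hC1 hC2 hC3 using H2
    -- replace each net by a net inside W within 2 ε n
    set f : ℕ → X → X := fun n c =>
      if hx : ∃ w ∈ W, dist w c ≤ ε n then hx.choose else w₀ with hfdef
    set D : ℕ → Set X := fun n => f n '' C n with hDdef
    have hDW : ∀ n, D n ⊆ W := by
      rintro n x ⟨c, hc, rfl⟩
      simp only [hfdef]
      split_ifs with hx
      · exact hx.choose_spec.1
      · exact hw₀
    have hDnet : ∀ n, ∀ w ∈ W, ∃ y ∈ D n, dist w y ≤ 2 * ε n := by
      intro n w hw
      obtain ⟨c, hc, hdc⟩ := hC2 n w hw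
      have hx : ∃ w' ∈ W, dist w' c ≤ ε n := ⟨w, hw, hdc⟩
      refine ⟨f n c, mem_image_of_mem _ hc, ?_⟩
      have hfc : f n c = hx.choose := by simp only [hfdef]; rw [dif_pos hx]
      have hspec := hx.choose_spec.2
      calc dist w (f n c) ≤ dist w c + dist c (f n c) := dist_triangle _ _ _
        _ ≤ ε n + ε n := by
            rw [hfc, dist_comm c]
            exact add_le_add hdc hspec
        _ = 2 * ε n := by ring
    have hDcard : ∀ n, #(D n) < μ := by
      intro n
      calc #(D n) ≤ #(C n) := mk_image_le
        _ < μ := by rw [hC3 n]; exact hε3 n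
    set Dt : Set X := ⋃ n : ULift.{u} ℕ, D n.down with hDtdef
    have hDtW : Dt ⊆ W := iUnion_subset fun n => hDW n.down
    have hDtdense : ∀ w ∈ W, ∀ δ : ℝ, 0 < δ → ∃ y ∈ Dt, dist w y < δ := by
      intro w hw δ hδ
      obtain ⟨n, hn⟩ := exists_nat_gt (2 / δ)
      have hn1 : 2 / δ < n + 1 := hn.trans (by linarith)
      have h2n : 2 / (n + 1 : ℝ) < δ := by
        rw [div_lt_iff₀ (by positivity)]
        rw [div_lt_iff₀ hδ] at hn1
        linarith
      obtain ⟨y, hy, hdy⟩ := hDnet n w hw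
      refine ⟨y, mem_iUnion.2 ⟨⟨n⟩, hy⟩, ?_⟩
      have : 2 * ε n < 2 / (n + 1 : ℝ) := by
        have := hε2 n
        rw [div_eq_mul_inv, ← one_div]
        linarith
      linarith
    have hμle : μ ≤ #Dt :=
      csInf_le (OrderBot.bddBelow _) ⟨Dt, hDtW, hDtdense, rfl⟩
    have hsup : (⨆ n : ULift.{u} ℕ, #(D n.down)) < μ := by
      refine Ordinal.iSup_lt ?_ fun n => hDcard n.down
      rwa [mk_eq_aleph0]
    have hDtlt : #Dt < μ := by
      calc #Dt ≤ #(ULift.{u} ℕ) * ⨆ n : ULift.{u} ℕ, #(D n.down) := mk_iUnion_le _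
        _ < μ := Cardinal.mul_lt_of_lt hℵμ.le (by rw [mk_eq_aleph0]; exact hℵμ) hsup
    exact hμle.not_gt hDtlt
  obtain ⟨ε₀, hε₀, hε₀le⟩ := hlow
  refine ⟨ε₀, hε₀, fun ε hε hεlt => ?_⟩
  obtain ⟨D₀, hD₀W, hD₀d, hD₀c⟩ := exists_dense_card W
  -- the dense set D₀ is an ε-net for W contained in W
  have hD₀net : IsNet dist ε W D₀ := fun w hw => by
    obtain ⟨y, hy, hlt⟩ := hD₀d w hw ε hε
    exact ⟨y, hy, hlt.le⟩
  -- maximal distinguishable set realizing the inf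
  have hMne : {κ | ∃ A : Set X, A ⊆ W ∧ IsDistinguishable dist ε A ∧
      (∀ B : Set X, B ⊆ W → IsDistinguishable dist ε B → A ⊆ B → A = B) ∧ #A = κ}.Nonempty := by
    obtain ⟨A, h1, h2, h3⟩ := exists_maximal_distinguishable W ε
    exact ⟨#A, A, h1, h2, h3, rfl⟩
  obtain ⟨A₁, hA₁W, hA₁d, hA₁max, hA₁c⟩ :
      ∃ A : Set X, A ⊆ W ∧ IsDistinguishable dist ε A ∧
      (∀ B : Set X, B ⊆ W → IsDistinguishable dist ε B → A ⊆ B → A = B) ∧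
      Cardinal.mk A = maximalPackingInf dist ε W := csInf_mem hMne
  -- chain of inequalities
  have i1 : coveringNumberIn dist ε Set.univ W ≤ coveringNumberIn dist ε W W := by
    refine csInf_le_csInf (OrderBot.bddBelow _) ⟨μ, D₀, hD₀W, hD₀net, hD₀c⟩ ?_
    rintro κ ⟨Cs, hCs, hnet, hcard⟩
    exact ⟨Cs, subset_univ _, hnet, hcard⟩
  have i2 : coveringNumberIn dist ε W W ≤ maximalPackingInf dist ε W := by
    rw [← hA₁c]
    exact csInf_le (OrderBot.bddBelow _)
      ⟨A₁, hA₁W, maximal_isNet hε hA₁W hA₁d hA₁max, rfl⟩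
  have i3 : maximalPackingInf dist ε W ≤ packingNumberSup dist ε W := by
    rw [← hA₁c]
    refine le_csSup ⟨μ, ?_⟩ ⟨A₁, hA₁W, hA₁d, rfl⟩
    rintro κ ⟨A, hAW, hAd, rfl⟩
    exact card_le_density hε hAW hAd
  have i4 : packingNumberSup dist ε W ≤ μ := by
    refine csSup_le ⟨0, ∅, empty_subset _, fun x hx => absurd hx (notMem_empty x),
      mk_emptyCollection X⟩ ?_
    rintro κ ⟨A, hAW, hAd, rfl⟩
    exact card_le_density hε hAW hAd
  have i0 : μ ≤ coveringNumberIn dist ε Set.univ W := hε₀le ε hε hεlt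
  have e1 : coveringNumberIn dist ε Set.univ W = μ :=
    le_antisymm (i1.trans (i2.trans (i3.trans i4))) i0
  have e2 : coveringNumberIn dist ε W W = μ :=
    le_antisymm (i2.trans (i3.trans i4)) (i0.trans i1)
  have e3 : maximalPackingInf dist ε W = μ :=
    le_antisymm (i3.trans i4) ((i0.trans i1).trans i2)
  have e4 : packingNumberSup dist ε W = μ :=
    le_antisymm i4 (((i0.trans i1).trans i2).trans i3)
  exact ⟨e1.trans e2.symm, e2.trans e3.symm, e3.trans e4.symm, e4⟩
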